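/- arXiv:2103.09223 — 5 statements merged into one kernel-verified Lean document; each statement's English description precedes it below -/
import Mathlib

section
/- For every n ≥ 1 and every p : Fin n → ℝ², the Hausdorff distance between the polygonal curve C(p) and the segment joining its first and last vertices equals the maximum over all vertices of the distance to that segment: hausdorffDist (C(p)) (segment ℝ (p 0) (p (n−1))) = max_{i : Fin n} infDist (p i) (segment ℝ (p 0) (p (n−1))). -/
open Metric

/-- The polygonal curve on vertices `p 0, …, p (n-1)`: the union of the segments
between consecutive vertices. -/
noncomputable def polyCurve {n : ℕ} (p : Fin n → EuclideanSpace ℝ (Fin 2)) :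
    Set (EuclideanSpace ℝ (Fin 2)) :=
  ⋃ i : Fin (n - 1),
    segment ℝ (p ⟨i.1, by have := i.isLt; omega⟩) (p ⟨i.1 + 1, by have := i.isLt; omega⟩)

section Aux

variable {E : Type*} [NormedAddCommGroup E] [NormedSpace ℝ E]

lemma aux_infDist_segment_le_max {S : Set E} (hS : Convex ℝ S) (hne : S.Nonempty)
    {a b x : E} (hx : x ∈ segment ℝ a b) :
    Metric.infDist x S ≤ max (Metric.infDist a S) (Metric.infDist b S) := by
  obtain ⟨u, v, hu, hv, huv, rfl⟩ := hx
  refine le_of_forall_pos_le_add fun ε hε => ?_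
  obtain ⟨za, hza, hda⟩ := (infDist_lt_iff hne).1
    (lt_add_of_pos_right (Metric.infDist a S) hε)
  obtain ⟨zb, hzb, hdb⟩ := (infDist_lt_iff hne).1
    (lt_add_of_pos_right (Metric.infDist b S) hε)
  have hz : u • za + v • zb ∈ S := hS hza hzb hu hv huv
  have h1 : dist (u • a + v • b) (u • za + v • zb) ≤ u * dist a za + v * dist b zb := by
    calc dist (u • a + v • b) (u • za + v • zb)
        ≤ dist (u • a) (u • za) + dist (v • b) (v • zb) := dist_add_add_le _ _ _ _
      _ = u * dist a za + v * dist b zb := by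
          rw [dist_smul₀, dist_smul₀, Real.norm_of_nonneg hu, Real.norm_of_nonneg hv]
  have hMa : Metric.infDist a S ≤ max (Metric.infDist a S) (Metric.infDist b S) := le_max_left _ _
  have hMb : Metric.infDist b S ≤ max (Metric.infDist a S) (Metric.infDist b S) := le_max_right _ _
  calc Metric.infDist (u • a + v • b) S ≤ dist (u • a + v • b) (u • za + v • zb) :=
        infDist_le_dist_of_mem hz
    _ ≤ u * dist a za + v * dist b zb := h1
    _ ≤ u * (max (Metric.infDist a S) (Metric.infDist b S) + ε)
        + v * (max (Metric.infDist a S) (Metric.infDist b S) + ε) := by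
        gcongr
        · exact hda.le.trans (by linarith)
        · exact hdb.le.trans (by linarith)
    _ = max (Metric.infDist a S) (Metric.infDist b S) + ε := by
        rw [← add_mul, huv, one_mul]

lemma aux_isBounded_segment (a b : E) : Bornology.IsBounded (segment ℝ a b) := by
  rw [segment_eq_image']
  exact (isCompact_Icc.image (by continuity)).isBounded

lemma aux_le_infDist {S : Set E} {x : E} {r : ℝ} (hne : S.Nonempty)
    (h : ∀ z ∈ S, r ≤ dist x z) :
    r ≤ Metric.infDist x S := by
  by_contra hlt
  obtain ⟨z, hz, hd⟩ := (infDist_lt_iff hne).1 (not_le.1 hlt)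
  exact absurd (h z hz) (not_le.2 hd)

end Aux

section Conn

variable {n : ℕ} (p : Fin n → EuclideanSpace ℝ (Fin 2))

lemma polyCurve_eq_iUnion_nat (hn : 2 ≤ n) :
    polyCurve p = ⋃ k : ℕ, segment ℝ (p ⟨min k (n-1), by omega⟩)
      (p ⟨min (k+1) (n-1), by omega⟩) := by
  apply Set.Subset.antisymm
  · refine Set.iUnion_subset fun i => ?_
    have hi := i.isLt
    have h1 : min i.1 (n-1) = i.1 := by omega
    have h2 : min (i.1+1) (n-1) = i.1 + 1 := by omega
    refine Set.subset_iUnion_of_subset i.1 ?_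
    simp only [h1, h2]
    exact subset_refl _
  · refine Set.iUnion_subset fun k => ?_
    by_cases hk : k < n - 1
    · have h1 : min k (n-1) = k := by omega
      have h2 : min (k+1) (n-1) = k + 1 := by omega
      refine Set.subset_iUnion_of_subset (⟨k, hk⟩ : Fin (n-1)) ?_
      simp only [h1, h2]
      exact subset_refl _
    · have h1 : min k (n-1) = n - 1 := by omega
      have h2 : min (k+1) (n-1) = n - 1 := by omega
      refine Set.Subset.trans ?_
        (Set.subset_iUnion_of_subset (⟨n-2, by omega⟩ : Fin (n-1)) (subset_refl _))
      simp only [h1, h2, segment_same]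
      intro x hx
      rcases hx with rfl
      have h3 : (⟨n-2+1, by omega⟩ : Fin n) = ⟨n-1, by omega⟩ :=
        Fin.mk_eq_mk.mpr (by omega)
      rw [h3]
      exact right_mem_segment ℝ _ _

lemma polyCurve_isPreconnected (hn : 2 ≤ n) : IsPreconnected (polyCurve p) := by
  rw [polyCurve_eq_iUnion_nat p hn]
  apply IsPreconnected.iUnion_of_chain
  · intro k
    exact (convex_segment _ _).isPreconnected
  · intro k
    refine ⟨p ⟨min (k+1) (n-1), by omega⟩, right_mem_segment ℝ _ _, ?_⟩
    have : Order.succ k = k + 1 := rfl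
    rw [this]
    exact left_mem_segment ℝ _ _

lemma mem_polyCurve (hn : 2 ≤ n) (i : Fin n) : p i ∈ polyCurve p := by
  by_cases hi : i.1 < n - 1
  · refine Set.mem_iUnion.2 ⟨⟨i.1, hi⟩, ?_⟩
    have : (⟨i.1, by omega⟩ : Fin n) = i := by ext; rfl
    rw [this]
    exact left_mem_segment ℝ _ _
  · refine Set.mem_iUnion.2 ⟨⟨n-2, by omega⟩, ?_⟩
    have hi' : i = ⟨n-2+1, by omega⟩ := by
      ext; simp only []; omega
    rw [hi']
    exact right_mem_segment ℝ _ _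

end Conn

theorem hausdorffDist_polyCurve_segment_eq_max
    (n : ℕ) (hn : 1 ≤ n) (p : Fin n → EuclideanSpace ℝ (Fin 2)) :
    Metric.hausdorffDist (polyCurve p)
        (segment ℝ (p ⟨0, by omega⟩) (p ⟨n - 1, by omega⟩)) =
      Finset.univ.sup' (Finset.univ_nonempty_iff.mpr ⟨⟨0, by omega⟩⟩)
        (fun i : Fin n =>
          Metric.infDist (p i) (segment ℝ (p ⟨0, by omega⟩) (p ⟨n - 1, by omega⟩))) := by
  rcases eq_or_lt_of_le hn with h1 | h2
  · -- n = 1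
    subst h1
    have hC : polyCurve p = ∅ := by simp [polyCurve]
    rw [hC, Metric.hausdorffDist_empty']
    symm
    apply le_antisymm
    · apply Finset.sup'_le
      intro i _
      have hi : p i = p ⟨0, by omega⟩ := congrArg p (Subsingleton.elim _ _)
      refine le_trans (infDist_le_dist_of_mem (left_mem_segment ℝ _ _)) ?_
      exact le_of_eq (by rw [hi, dist_self])
    · have h := Finset.le_sup'
        (fun i : Fin 1 => Metric.infDist (p i)
          (segment ℝ (p ⟨0, by omega⟩) (p ⟨1 - 1, by omega⟩)))
        (Finset.mem_univ (⟨0, by omega⟩ : Fin 1))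
      exact le_trans Metric.infDist_nonneg h
  · -- n ≥ 2
    have hn2 : 2 ≤ n := h2
    set a : EuclideanSpace ℝ (Fin 2) := p ⟨0, by omega⟩ with ha
    set b : EuclideanSpace ℝ (Fin 2) := p ⟨n - 1, by omega⟩ with hb
    set S : Set (EuclideanSpace ℝ (Fin 2)) := segment ℝ a b with hSdef
    set C : Set (EuclideanSpace ℝ (Fin 2)) := polyCurve p with hCdef
    have hSne : S.Nonempty := ⟨a, left_mem_segment ℝ _ _⟩
    have hCne : C.Nonempty := ⟨a, mem_polyCurve p hn2 _⟩
    set M : ℝ := Finset.univ.sup' (Finset.univ_nonempty_iff.mpr ⟨⟨0, by omega⟩⟩)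
        (fun i : Fin n => Metric.infDist (p i) S) with hM
    have hMi : ∀ i : Fin n, Metric.infDist (p i) S ≤ M := fun i =>
      Finset.le_sup' (fun j : Fin n => Metric.infDist (p j) S) (Finset.mem_univ i)
    have hM0 : 0 ≤ M := le_trans infDist_nonneg (hMi ⟨0, by omega⟩)
    -- every point of C is within M of S
    have hCS2 : ∀ x ∈ C, Metric.infDist x S ≤ M := by
      intro x hx
      rw [hCdef, polyCurve] at hx
      obtain ⟨i, hi⟩ := Set.mem_iUnion.1 hx
      refine le_trans (aux_infDist_segment_le_max (convex_segment a b) hSne hi) ?_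
      exact max_le (hMi _) (hMi _)
    -- every point of S is within M of C
    have hSC : ∀ y ∈ S, Metric.infDist y C ≤ M := by
      intro y hy
      set v : EuclideanSpace ℝ (Fin 2) := b - a with hv
      set f : EuclideanSpace ℝ (Fin 2) → ℝ := fun x => inner ℝ (x - a) v with hf
      have hfc : Continuous f := by
        apply Continuous.inner
        · exact (continuous_id.sub continuous_const)
        · exact continuous_const
      have hconn : IsPreconnected (f '' C) :=
        (polyCurve_isPreconnected p hn2).image f hfc.continuousOn
      have hfa : f a = 0 := by simp [hf]
      have hfb : f b = ‖v‖ ^ 2 := by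
        simp only [hf, hv]
        rw [real_inner_self_eq_norm_sq]
      have haC : f a ∈ f '' C := ⟨a, mem_polyCurve p hn2 _, rfl⟩
      have hbC : f b ∈ f '' C := ⟨b, mem_polyCurve p hn2 _, rfl⟩
      -- y = a + t • v with t ∈ [0,1]
      rw [hSdef, segment_eq_image'] at hy
      obtain ⟨t, ht, rfl⟩ := hy
      have hfy : f (a + t • v) = t * ‖v‖ ^ 2 := by
        simp only [hf, add_sub_cancel_left, real_inner_smul_left, real_inner_self_eq_norm_sq]
      have hmem : f (a + t • v) ∈ Set.Icc (f a) (f b) := by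
        rw [hfa, hfb, hfy]
        constructor
        · exact mul_nonneg ht.1 (sq_nonneg _)
        · nlinarith [ht.1, ht.2, sq_nonneg ‖v‖]
      obtain ⟨x, hxC, hfx⟩ := hconn.Icc_subset haC hbC hmem
      -- x - y ⟂ v
      have horth : inner ℝ (x - (a + t • v)) v = (0 : ℝ) := by
        have : f x = f (a + t • v) := hfx
        simp only [hf] at this
        have h' : inner ℝ (x - a) v - inner ℝ ((a + t • v) - a) v = (0:ℝ) := by
          rw [this]; ring
        rw [← inner_sub_left] at h'
        convert h' using 2
        abel
      -- dist x y ≤ dist x z for all z ∈ S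
      have hkey : ∀ z ∈ S, dist x (a + t • v) ≤ dist x z := by
        intro z hz
        rw [hSdef, segment_eq_image'] at hz
        obtain ⟨s, hs, rfl⟩ := hz
        have hdecomp : x - (a + s • v) = (x - (a + t • v)) - (s - t) • v := by
          rw [sub_smul]; abel
        rw [dist_eq_norm, dist_eq_norm, hdecomp]
        have hsq : ‖x - (a + t • v)‖ ^ 2 ≤ ‖(x - (a + t • v)) - (s - t) • v‖ ^ 2 := by
          have hexp := norm_sub_sq_real (x - (a + t • v)) ((s - t) • v)
          rw [real_inner_smul_right, horth] at hexp
          nlinarith [sq_nonneg ‖(s - t) • v‖]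
        nlinarith [norm_nonneg (x - (a + t • v)),
          norm_nonneg ((x - (a + t • v)) - (s - t) • v)]
      have h3 : dist x (a + t • v) ≤ Metric.infDist x S :=
        aux_le_infDist hSne fun z hz => hkey z hz
      calc Metric.infDist (a + t • v) C ≤ dist (a + t • v) x := infDist_le_dist_of_mem hxC
        _ = dist x (a + t • v) := dist_comm _ _
        _ ≤ Metric.infDist x S := h3
        _ ≤ M := hCS2 x hxC
    have hfin : EMetric.hausdorffEdist C S ≠ ⊤ := by
      apply hausdorffEdist_ne_top_of_nonempty_of_bounded hCne hSne
      · rw [hCdef, polyCurve]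
        exact Bornology.isBounded_iUnion.2 fun i => aux_isBounded_segment _ _
      · exact aux_isBounded_segment a b
    apply le_antisymm
    · exact hausdorffDist_le_of_infDist hM0 hCS2 hSC
    · refine Finset.sup'_le _ _ fun i _ => ?_
      exact infDist_le_hausdorffDist_of_mem (mem_polyCurve p hn2 i) hfin
end

section
/- Let n ≥ 2 and p : Fin n → ℝ² with p 0 ≠ p (n−1), let L = segment ℝ (p 0) (p (n−1)), and let γ(t) = (1−t) • p 0 + t • p (n−1) parametrize L. For every t ∈ [0, 1) there exist an index i with i + 1 ≤ n − 1 and parameters s, s' ∈ [0, 1] such that γ(s) is a nearest point of L to p i (i.e. dist (p i) (γ s) = infDist (p i) L), γ(s') is a nearest point of L to p (i+1), and s ≤ t < s'. -/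
open Metric

theorem exists_bracketing_nearest_points
    (n : ℕ) (hn : 2 ≤ n) (p : Fin n → EuclideanSpace ℝ (Fin 2))
    (hp : p ⟨0, by omega⟩ ≠ p ⟨n - 1, by omega⟩)
    (t : ℝ) (ht : t ∈ Set.Ico (0 : ℝ) 1) :
    ∃ (i : ℕ) (hi : i + 1 ≤ n - 1) (s s' : ℝ),
      s ∈ Set.Icc (0 : ℝ) 1 ∧ s' ∈ Set.Icc (0 : ℝ) 1 ∧
      dist (p ⟨i, by omega⟩)
          ((1 - s) • p ⟨0, by omega⟩ + s • p ⟨n - 1, by omega⟩) =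
        Metric.infDist (p ⟨i, by omega⟩)
          (segment ℝ (p ⟨0, by omega⟩) (p ⟨n - 1, by omega⟩)) ∧
      dist (p ⟨i + 1, by omega⟩)
          ((1 - s') • p ⟨0, by omega⟩ + s' • p ⟨n - 1, by omega⟩) =
        Metric.infDist (p ⟨i + 1, by omega⟩)
          (segment ℝ (p ⟨0, by omega⟩) (p ⟨n - 1, by omega⟩)) ∧
      s ≤ t ∧ t < s' := by
  obtain ⟨ht0, ht1⟩ := ht
  set A := p ⟨0, by omega⟩ with hA
  set B := p ⟨n - 1, by omega⟩ with hB
  have hcomp : IsCompact (segment ℝ A B) := by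
    rw [segment_eq_image ℝ A B]
    exact isCompact_Icc.image (by fun_prop)
  have hseg : ∀ x : EuclideanSpace ℝ (Fin 2), ∃ s : ℝ, s ∈ Set.Icc (0:ℝ) 1 ∧
      dist x ((1 - s) • A + s • B) = infDist x (segment ℝ A B) := by
    intro x
    obtain ⟨y, hy, hdy⟩ := hcomp.exists_infDist_eq_dist
      ⟨A, left_mem_segment ℝ A B⟩ x
    obtain ⟨a, b, ha, hb, hab, hy'⟩ := hy
    refine ⟨b, ⟨hb, by linarith⟩, ?_⟩
    rw [show (1:ℝ) - b = a by linarith, hy']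
    exact hdy.symm
  choose σ hσ1 hσ2 using fun k : ℕ => hseg (p ⟨min k (n-1), by omega⟩)
  set τ : ℕ → ℝ := fun k => if k = 0 then 0 else if k = n - 1 then 1 else σ k with hτ
  have hτmem : ∀ k, τ k ∈ Set.Icc (0:ℝ) 1 := by
    intro k
    simp only [hτ]
    split
    · exact ⟨le_refl 0, zero_le_one⟩
    · split
      · exact ⟨zero_le_one, le_refl 1⟩
      · exact hσ1 k
  have hγ0 : (1 - (0:ℝ)) • A + (0:ℝ) • B = A := by
    simp
  have hγ1 : (1 - (1:ℝ)) • A + (1:ℝ) • B = B := by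
    simp
  have hτdist : ∀ k (hk : k ≤ n - 1),
      dist (p ⟨k, by omega⟩) ((1 - τ k) • A + τ k • B) =
        infDist (p ⟨k, by omega⟩) (segment ℝ A B) := by
    intro k hk
    simp only [hτ]
    split
    · next h =>
        subst h
        show dist A ((1 - (0:ℝ)) • A + (0:ℝ) • B) = infDist A (segment ℝ A B)
        rw [hγ0, dist_self, infDist_zero_of_mem (left_mem_segment ℝ A B)]
    · split
      · next h =>
          subst h
          show dist B ((1 - (1:ℝ)) • A + (1:ℝ) • B) = infDist B (segment ℝ A B)
          rw [hγ1, dist_self, infDist_zero_of_mem (right_mem_segment ℝ A B)]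
      · have hpk : p ⟨min k (n-1), by omega⟩ = p ⟨k, by omega⟩ :=
          congrArg p (Fin.mk_eq_mk.mpr (min_eq_left hk))
        rw [← hpk]
        exact hσ2 k
  have hw : t < τ (n - 1) := by
    have hne : n - 1 ≠ 0 := by omega
    simp only [hτ, hne, if_false, if_pos rfl]
    exact ht1
  have hex : ∃ k, t < τ k := ⟨n - 1, hw⟩
  set j := Nat.find hex with hj
  have hjspec : t < τ j := Nat.find_spec hex
  have hj0 : j ≠ 0 := by
    intro h
    rw [h] at hjspec
    simp only [hτ, if_pos rfl] at hjspec
    linarith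
  have hjle : j ≤ n - 1 := Nat.find_min' hex hw
  have hprev : τ (j - 1) ≤ t := by
    have := Nat.find_min hex (show j - 1 < j by omega)
    exact not_lt.mp this
  obtain ⟨i, hij⟩ : ∃ i, j = i + 1 := ⟨j - 1, by omega⟩
  rw [hij] at hjspec hprev hjle
  refine ⟨i, by omega, τ i, τ (i + 1), hτmem i, hτmem (i + 1), ?_, ?_, ?_, hjspec⟩
  · exact hτdist i (by omega)
  · exact hτdist (i + 1) (by omega)
  · simpa using hprev
end

section
/- Let n ≥ 3, let c : Fin n → ℝ² and r : Fin n → ℝ with r i ≥ 0 for all i, set U i = closedBall (c i) (r i), and fix p1 ∈ U 0 and pn ∈ U (n−1). Then the value max over interior indices i (0 < i < n−1) of (infDist (c i) (segment ℝ p1 pn) + r i) is the greatest element of the set { hausdorffDist (C(π)) (segment ℝ p1 pn) | π : Fin n → ℝ², (∀ i, π i ∈ U i), π 0 = p1, π (n−1) = pn }. -/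
open Metric

local notation "E2" => EuclideanSpace ℝ (Fin 2)


private lemma isCompact_seg (x y : E2) : IsCompact (segment ℝ x y) := by
  rw [segment_eq_image]
  exact isCompact_Icc.image (by continuity)

private lemma seg_ne (x y : E2) : (segment ℝ x y).Nonempty := ⟨x, left_mem_segment ℝ x y⟩

private lemma le_infDist' {s : Set E2} (hs : s.Nonempty) {x : E2} {b : ℝ}
    (h : ∀ y ∈ s, b ≤ dist x y) : b ≤ infDist x s := by
  by_contra hlt
  push_neg at hlt
  obtain ⟨y, hy, hd⟩ := (infDist_lt_iff hs).1 hlt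
  exact absurd (h y hy) (by linarith)

private lemma infDist_le_max_of_mem_segment {S : Set E2} (hconv : Convex ℝ S)
    (hcpt : IsCompact S) (hne : S.Nonempty) {u v x : E2} (hx : x ∈ segment ℝ u v) :
    infDist x S ≤ max (infDist u S) (infDist v S) := by
  obtain ⟨a, b, ha, hb, hab, rfl⟩ := hx
  obtain ⟨su, hsu, hdu⟩ := hcpt.exists_infDist_eq_dist hne u
  obtain ⟨sv, hsv, hdv⟩ := hcpt.exists_infDist_eq_dist hne v
  have hmem : a • su + b • sv ∈ S := hconv hsu hsv ha hb hab
  have h1 : infDist (a • u + b • v) S ≤ dist (a • u + b • v) (a • su + b • sv) :=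
    infDist_le_dist_of_mem hmem
  have h2 : dist (a • u + b • v) (a • su + b • sv) ≤ a * dist u su + b * dist v sv := by
    rw [dist_eq_norm, dist_eq_norm, dist_eq_norm]
    have he : a • u + b • v - (a • su + b • sv) = a • (u - su) + b • (v - sv) := by module
    rw [he]
    calc ‖a • (u - su) + b • (v - sv)‖ ≤ ‖a • (u - su)‖ + ‖b • (v - sv)‖ := norm_add_le _ _
      _ = a * ‖u - su‖ + b * ‖v - sv‖ := by
          rw [norm_smul, norm_smul, Real.norm_of_nonneg ha, Real.norm_of_nonneg hb]
  have h3 : a * dist u su + b * dist v sv ≤ max (infDist u S) (infDist v S) := by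
    rw [← hdu, ← hdv]
    have hu' : infDist u S ≤ max (infDist u S) (infDist v S) := le_max_left _ _
    have hv' : infDist v S ≤ max (infDist u S) (infDist v S) := le_max_right _ _
    calc a * infDist u S + b * infDist v S
        ≤ a * max (infDist u S) (infDist v S) + b * max (infDist u S) (infDist v S) :=
          add_le_add (mul_le_mul_of_nonneg_left hu' ha) (mul_le_mul_of_nonneg_left hv' hb)
      _ = max (infDist u S) (infDist v S) := by rw [← add_mul, hab, one_mul]
  linarith

private lemma exists_unit_perp (u : E2) :
    ∃ w : E2, ‖w‖ = 1 ∧ inner ℝ u w = (0:ℝ) := by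
  by_cases hu : u = 0
  · exact ⟨EuclideanSpace.single 0 1, by simp, by simp [hu]⟩
  · set w0 : E2 := (WithLp.equiv 2 (Fin 2 → ℝ)).symm ![-(u 1), u 0] with hw0
    have hinner : inner ℝ u w0 = (0:ℝ) := by
      simp [hw0, PiLp.inner_apply, Fin.sum_univ_two, WithLp.equiv_symm_apply, PiLp.toLp_apply,
        RCLike.inner_apply]
      ring
    have hnorm : ‖w0‖ = ‖u‖ := by
      rw [EuclideanSpace.norm_eq, EuclideanSpace.norm_eq]
      congr 1
      simp [hw0, Fin.sum_univ_two, WithLp.equiv_symm_apply, PiLp.toLp_apply, Real.norm_eq_abs, sq_abs]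
      ring
    have hu' : ‖u‖ ≠ 0 := norm_ne_zero_iff.2 hu
    refine ⟨‖u‖⁻¹ • w0, ?_, ?_⟩
    · rw [norm_smul, hnorm, Real.norm_eq_abs, abs_inv, abs_norm]
      field_simp
    · rw [real_inner_smul_right, hinner, mul_zero]

/-- Decompose the difference of two points of a segment. -/
private lemma seg_diff {p1 pn s q : E2} (hs : s ∈ segment ℝ p1 pn)
    (hq : q ∈ segment ℝ p1 pn) : ∃ t : ℝ, s - q = t • (pn - p1) := by
  obtain ⟨a, b, ha, hb, hab, rfl⟩ := hs
  obtain ⟨a', b', ha', hb', hab', rfl⟩ := hq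
  refine ⟨b - b', ?_⟩
  have h1 : a = 1 - b := by linarith
  have h2 : a' = 1 - b' := by linarith
  subst h1 h2
  module

private lemma exists_far_point (p1 pn x : E2) {ρ : ℝ} (hρ : 0 ≤ ρ) :
    ∃ y : E2, dist x y ≤ ρ ∧
      infDist y (segment ℝ p1 pn) = infDist x (segment ℝ p1 pn) + ρ := by
  set S := segment ℝ p1 pn with hS
  obtain ⟨q, hqS, hdq⟩ := (isCompact_seg p1 pn).exists_infDist_eq_dist (seg_ne p1 pn) x
  have hw : ∃ w : E2, ‖w‖ = 1 ∧ inner ℝ (x - q) w = infDist x S ∧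
      ∀ s ∈ S, inner ℝ (s - q) w ≤ (0:ℝ) := by
    by_cases hxq : x = q
    · obtain ⟨w, hw1, hw2⟩ := exists_unit_perp (pn - p1)
      refine ⟨w, hw1, ?_, ?_⟩
      · have h0 : infDist q S = 0 := by
          rw [← hxq]; rw [hdq, hxq, dist_self]
        rw [hxq, sub_self, inner_zero_left, h0]
      · intro s hs
        obtain ⟨t, ht⟩ := seg_diff hs hqS
        rw [ht, real_inner_smul_left, real_inner_comm] at *
        rw [hw2, mul_zero]
    · have hnz : ‖x - q‖ ≠ 0 := by
        simpa [sub_eq_zero] using hxq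
      have hpos : 0 < ‖x - q‖ := lt_of_le_of_ne (norm_nonneg _) (Ne.symm hnz)
      have hsep : ∀ s ∈ S, inner ℝ (x - q) (s - q) ≤ (0:ℝ) := by
        have hinf : ‖x - q‖ = ⨅ w : S, ‖x - (w : E2)‖ := by
          rw [← dist_eq_norm, ← hdq, infDist_eq_iInf]
          exact iInf_congr fun y => dist_eq_norm _ _
        exact (norm_eq_iInf_iff_real_inner_le_zero (convex_segment p1 pn) hqS).1 hinf
      refine ⟨‖x - q‖⁻¹ • (x - q), ?_, ?_, ?_⟩
      · rw [norm_smul, Real.norm_eq_abs, abs_inv, abs_norm]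
        field_simp
      · rw [real_inner_smul_right, real_inner_self_eq_norm_sq, hdq, dist_eq_norm]
        field_simp
      · intro s hs
        rw [real_inner_smul_right]
        have := hsep s hs
        rw [real_inner_comm] at this
        exact mul_nonpos_of_nonneg_of_nonpos (inv_nonneg.2 (norm_nonneg _)) this
  obtain ⟨w, hw1, hw2, hw3⟩ := hw
  refine ⟨x + ρ • w, by rw [dist_self_add_right, norm_smul, Real.norm_of_nonneg hρ, hw1, mul_one], ?_⟩
  have hub : infDist (x + ρ • w) S ≤ infDist x S + ρ := by
    calc infDist (x + ρ • w) S ≤ dist (x + ρ • w) q := infDist_le_dist_of_mem hqS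
      _ ≤ dist (x + ρ • w) x + dist x q := dist_triangle _ _ _
      _ = ρ + infDist x S := by
          rw [dist_comm, dist_self_add_right, norm_smul, Real.norm_of_nonneg hρ, hw1,
            mul_one, ← hdq]
      _ = infDist x S + ρ := by ring
  have hlb : infDist x S + ρ ≤ infDist (x + ρ • w) S := by
    apply le_infDist' (seg_ne p1 pn)
    intro s hs
    have h1 : inner ℝ (x + ρ • w - s) w ≤ dist (x + ρ • w) s := by
      calc inner ℝ (x + ρ • w - s) w ≤ ‖x + ρ • w - s‖ * ‖w‖ := real_inner_le_norm _ _
        _ = dist (x + ρ • w) s := by rw [hw1, mul_one, dist_eq_norm]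
    have he : x + ρ • w - s = (x - q) + (q - s) + ρ • w := by abel
    have h2 : inner ℝ (x + ρ • w - s) w = infDist x S + inner ℝ (q - s) w + ρ := by
      rw [he, inner_add_left, inner_add_left, hw2, real_inner_smul_left,
        real_inner_self_eq_norm_sq, hw1]
      ring
    have h3 : (0:ℝ) ≤ inner ℝ (q - s) w := by
      have := hw3 s hs
      have hneg : (q - s) = -(s - q) := by abel
      rw [hneg, inner_neg_left]
      linarith
    linarith
  exact le_antisymm hub hlb

private lemma mem_polyCurve_of {n : ℕ} (p : Fin n → E2) (i : ℕ) (h : i < n - 1) {x : E2}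
    (hx : x ∈ segment ℝ (p ⟨i, by omega⟩) (p ⟨i+1, by omega⟩)) : x ∈ polyCurve p := by
  unfold polyCurve
  exact Set.mem_iUnion.2 ⟨⟨i, h⟩, hx⟩

private lemma mem_polyCurve_elim {n : ℕ} (p : Fin n → E2) {x : E2} (hx : x ∈ polyCurve p) :
    ∃ i : ℕ, ∃ _ : i < n - 1, x ∈ segment ℝ (p ⟨i, by omega⟩) (p ⟨i+1, by omega⟩) := by
  unfold polyCurve at hx
  obtain ⟨j, hj⟩ := Set.mem_iUnion.1 hx
  exact ⟨j.1, j.isLt, hj⟩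

private lemma isCompact_polyCurve {n : ℕ} (p : Fin n → E2) :
    IsCompact (polyCurve p) := by
  unfold polyCurve
  apply isCompact_iUnion
  intro i
  rw [segment_eq_image]
  exact isCompact_Icc.image (by continuity)

private lemma polyCurve_preconnected {n : ℕ} (hn : 3 ≤ n) (p : Fin n → E2) :
    IsPreconnected (polyCurve p) := by
  have hn1 : 1 ≤ n - 1 := by omega
  set s : ℕ → Set E2 := fun i =>
    segment ℝ (p ⟨min i (n-1), by omega⟩) (p ⟨min (i+1) (n-1), by omega⟩) with hs
  have hseq : ∀ i : ℕ, ∀ _ : i < n - 1,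
      s i = segment ℝ (p ⟨i, by omega⟩) (p ⟨i+1, by omega⟩) := by
    intro i hi
    have e1 : (⟨min i (n-1), by omega⟩ : Fin n) = ⟨i, by omega⟩ :=
      Fin.ext (show min i (n-1) = i by omega)
    have e2 : (⟨min (i+1) (n-1), by omega⟩ : Fin n) = ⟨i+1, by omega⟩ :=
      Fin.ext (show min (i+1) (n-1) = i+1 by omega)
    conv_lhs => rw [hs]
    beta_reduce
    rw [e1, e2]
  have hseq' : ∀ i : ℕ, ¬ i < n - 1 → s i = {p ⟨n-1, by omega⟩} := by
    intro i hi
    have e1 : (⟨min i (n-1), by omega⟩ : Fin n) = ⟨n-1, by omega⟩ :=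
      Fin.ext (show min i (n-1) = n-1 by omega)
    have e2 : (⟨min (i+1) (n-1), by omega⟩ : Fin n) = ⟨n-1, by omega⟩ :=
      Fin.ext (show min (i+1) (n-1) = n-1 by omega)
    conv_lhs => rw [hs]
    beta_reduce
    rw [e1, e2, segment_same]
  have hpre : IsPreconnected (⋃ i : ℕ, s i) := by
    apply IsPreconnected.iUnion_of_chain
    · intro i
      exact (convex_segment _ _).isPreconnected
    · intro i
      rw [Order.succ_eq_add_one]
      exact ⟨p ⟨min (i+1) (n-1), by omega⟩, right_mem_segment _ _ _, left_mem_segment _ _ _⟩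
  have hEq : (⋃ i : ℕ, s i) = polyCurve p := by
    apply Set.Subset.antisymm
    · rintro x hx
      obtain ⟨i, hi⟩ := Set.mem_iUnion.1 hx
      by_cases h : i < n - 1
      · rw [hseq i h] at hi
        exact mem_polyCurve_of p i h hi
      · rw [hseq' i h, Set.mem_singleton_iff] at hi
        subst hi
        apply mem_polyCurve_of p (n-2) (by omega)
        have e3 : (⟨(n-2)+1, by omega⟩ : Fin n) = ⟨n-1, by omega⟩ :=
          Fin.ext (show (n-2)+1 = n-1 by omega)
        rw [e3]
        exact right_mem_segment _ _ _
    · rintro x hx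
      obtain ⟨i, hlt, hi⟩ := mem_polyCurve_elim p hx
      refine Set.mem_iUnion.2 ⟨i, ?_⟩
      rw [hseq i hlt]
      exact hi
  rw [← hEq]
  exact hpre

private lemma p1_mem_polyCurve {n : ℕ} (hn : 3 ≤ n) (p : Fin n → E2) :
    p ⟨0, Nat.lt_of_lt_of_le (Nat.succ_pos 2) hn⟩ ∈ polyCurve p :=
  mem_polyCurve_of p 0 (by omega) (left_mem_segment _ _ _)

private lemma pn_mem_polyCurve {n : ℕ} (hn : 3 ≤ n) (p : Fin n → E2) :
    p ⟨n-1, Nat.sub_lt (Nat.lt_of_lt_of_le (Nat.succ_pos 2) hn) Nat.one_pos⟩ ∈ polyCurve p := by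
  apply mem_polyCurve_of p (n-2) (by omega)
  have e3 : (⟨(n-2)+1, by omega⟩ : Fin n) = ⟨n-1, by omega⟩ :=
    Fin.ext (show (n-2)+1 = n-1 by omega)
  rw [e3]
  exact right_mem_segment _ _ _

private lemma infDist_seg_le_aux {n : ℕ} (hn : 3 ≤ n) (π : Fin n → E2) (p1 pn : E2)
    (h0 : π ⟨0, Nat.lt_of_lt_of_le (Nat.succ_pos 2) hn⟩ = p1) (hl : π ⟨n-1, Nat.sub_lt (Nat.lt_of_lt_of_le (Nat.succ_pos 2) hn) Nat.one_pos⟩ = pn)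
    {M : ℝ} (hcurve : ∀ x ∈ polyCurve π, infDist x (segment ℝ p1 pn) ≤ M)
    {q : E2} (hq : q ∈ segment ℝ p1 pn) :
    infDist q (polyCurve π) ≤ M := by
  set f : E2 → ℝ := fun x => inner ℝ (pn - p1) x with hf
  have hfc : ContinuousOn f (polyCurve π) :=
    (Continuous.inner continuous_const continuous_id).continuousOn
  have hp1m : p1 ∈ polyCurve π := h0 ▸ p1_mem_polyCurve hn π
  have hpnm : pn ∈ polyCurve π := hl ▸ pn_mem_polyCurve hn π
  have hqmem := hq
  obtain ⟨a, b, ha, hb, hab, rfl⟩ := hq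
  have hfle : f p1 ≤ f pn := by
    have hd : f pn - f p1 = inner ℝ (pn - p1) (pn - p1) := by
      rw [hf]; simp only [inner_sub_right]
    have := real_inner_self_nonneg (x := pn - p1)
    linarith
  have hfq : f (a • p1 + b • pn) = a * f p1 + b * f pn := by
    rw [hf]; simp only [inner_add_right, real_inner_smul_right]
  have hmem : f (a • p1 + b • pn) ∈ Set.Icc (f p1) (f pn) := by
    rw [hfq]
    obtain rfl : a = 1 - b := by linarith
    constructor <;>
      nlinarith [mul_nonneg hb (sub_nonneg.2 hfle),
        mul_nonneg (by linarith : (0:ℝ) ≤ 1 - b) (sub_nonneg.2 hfle)]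
  obtain ⟨x, hxc, hfx⟩ :=
    (polyCurve_preconnected hn π).intermediate_value hp1m hpnm hfc hmem
  have horth : inner ℝ (x - (a • p1 + b • pn)) (pn - p1) = (0:ℝ) := by
    rw [real_inner_comm, inner_sub_right]
    have : f x = f (a • p1 + b • pn) := hfx
    rw [hf] at this
    simp only at this
    linarith [this]
  have hkey : ∀ s ∈ segment ℝ p1 pn, dist (a • p1 + b • pn) x ≤ dist x s := by
    intro s hs
    obtain ⟨t, ht⟩ := seg_diff hs hqmem
    have hxs : x - s = (x - (a • p1 + b • pn)) - (s - (a • p1 + b • pn)) := by abel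
    have hsq : ‖x - s‖^2 = ‖x - (a • p1 + b • pn)‖^2 + ‖s - (a • p1 + b • pn)‖^2 := by
      rw [hxs, norm_sub_sq_real, ht, real_inner_smul_right, horth, mul_zero]
      ring
    have h1 : ‖x - (a • p1 + b • pn)‖ ≤ ‖x - s‖ := by
      nlinarith [norm_nonneg (x - s), norm_nonneg (x - (a • p1 + b • pn)),
        sq_nonneg ‖s - (a • p1 + b • pn)‖]
    rw [dist_eq_norm, dist_eq_norm, norm_sub_rev]
    exact h1
  calc infDist (a • p1 + b • pn) (polyCurve π) ≤ dist (a • p1 + b • pn) x :=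
        infDist_le_dist_of_mem hxc
    _ ≤ infDist x (segment ℝ p1 pn) := le_infDist' (seg_ne p1 pn) hkey
    _ ≤ M := hcurve x hxc

private lemma haus_le {n : ℕ} (hn : 3 ≤ n) (c : Fin n → E2) (r : Fin n → ℝ)
    (p1 pn : E2) (π : Fin n → E2)
    (hπ : ∀ i, π i ∈ Metric.closedBall (c i) (r i))
    (h0 : π ⟨0, Nat.lt_of_lt_of_le (Nat.succ_pos 2) hn⟩ = p1) (hl : π ⟨n-1, Nat.sub_lt (Nat.lt_of_lt_of_le (Nat.succ_pos 2) hn) Nat.one_pos⟩ = pn)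
    {M : ℝ} (hM0 : 0 ≤ M)
    (hMi : ∀ i : Fin n, 0 < i.1 → i.1 < n - 1 →
      infDist (c i) (segment ℝ p1 pn) + r i ≤ M) :
    hausdorffDist (polyCurve π) (segment ℝ p1 pn) ≤ M := by
  have hvert : ∀ j : Fin n, infDist (π j) (segment ℝ p1 pn) ≤ M := by
    intro j
    have hjn := j.isLt
    by_cases hj0 : j.1 = 0
    · have hj : j = ⟨0, by omega⟩ := Fin.ext hj0
      rw [hj, h0, infDist_zero_of_mem (left_mem_segment ℝ p1 pn)]; exact hM0
    · by_cases hjl : j.1 = n - 1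
      · have hj : j = ⟨n-1, by omega⟩ := Fin.ext hjl
        rw [hj, hl, infDist_zero_of_mem (right_mem_segment ℝ p1 pn)]; exact hM0
      · have h1 : infDist (π j) (segment ℝ p1 pn) ≤
            infDist (c j) (segment ℝ p1 pn) + dist (π j) (c j) :=
          infDist_le_infDist_add_dist
        have h2 : dist (π j) (c j) ≤ r j := mem_closedBall.1 (hπ j)
        have h3 := hMi j (by omega) (by omega)
        linarith
  have hcurve : ∀ x ∈ polyCurve π, infDist x (segment ℝ p1 pn) ≤ M := by
    intro x hx
    obtain ⟨i, hlt, hi⟩ := mem_polyCurve_elim π hx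
    exact le_trans
      (infDist_le_max_of_mem_segment (convex_segment p1 pn) (isCompact_seg p1 pn)
        (seg_ne p1 pn) hi)
      (max_le (hvert _) (hvert _))
  exact hausdorffDist_le_of_infDist hM0 hcurve
    (fun q hq => infDist_seg_le_aux hn π p1 pn h0 hl hcurve hq)


/-- Disks, fixed endpoints: the greatest Hausdorff distance between a realisation and
the one-segment simplification is the maximum, over interior indices `i`, of the
distance from the centre `c i` to the segment plus the radius `r i`. -/
theorem hausdorff_disks_fixed_endpoints
    (n : ℕ) (hn : 3 ≤ n) (c : Fin n → EuclideanSpace ℝ (Fin 2)) (r : Fin n → ℝ)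
    (hr : ∀ i, 0 ≤ r i)
    (p1 pn : EuclideanSpace ℝ (Fin 2))
    (hp1 : p1 ∈ Metric.closedBall (c ⟨0, by omega⟩) (r ⟨0, by omega⟩))
    (hpn : pn ∈ Metric.closedBall (c ⟨n - 1, by omega⟩) (r ⟨n - 1, by omega⟩)) :
    ∃ M : ℝ,
      IsGreatest {x : ℝ | ∃ i : Fin n, 0 < i.1 ∧ i.1 < n - 1 ∧
        x = Metric.infDist (c i) (segment ℝ p1 pn) + r i} M ∧
      IsGreatest {d : ℝ | ∃ π : Fin n → EuclideanSpace ℝ (Fin 2),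
        (∀ i, π i ∈ Metric.closedBall (c i) (r i)) ∧
        π ⟨0, by omega⟩ = p1 ∧ π ⟨n - 1, by omega⟩ = pn ∧
        d = Metric.hausdorffDist (polyCurve π) (segment ℝ p1 pn)} M := by
    classical
  obtain ⟨i₀, hi₀T, hmax⟩ := Finset.exists_max_image
    (Finset.univ.filter (fun i : Fin n => 0 < i.1 ∧ i.1 < n - 1))
    (fun i => infDist (c i) (segment ℝ p1 pn) + r i)
    ⟨⟨1, by omega⟩, Finset.mem_filter.2 ⟨Finset.mem_univ _, Nat.one_pos, by
      show (1:ℕ) < n - 1; omega⟩⟩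
  obtain ⟨-, hi₀1, hi₀2⟩ := Finset.mem_filter.1 hi₀T
  have hMi : ∀ i : Fin n, 0 < i.1 → i.1 < n - 1 →
      infDist (c i) (segment ℝ p1 pn) + r i ≤
        infDist (c i₀) (segment ℝ p1 pn) + r i₀ := fun i h1 h2 =>
    hmax i (Finset.mem_filter.2 ⟨Finset.mem_univ _, h1, h2⟩)
  have hM0 : 0 ≤ infDist (c i₀) (segment ℝ p1 pn) + r i₀ :=
    add_nonneg infDist_nonneg (hr i₀)
  refine ⟨infDist (c i₀) (segment ℝ p1 pn) + r i₀,
    ⟨⟨i₀, hi₀1, hi₀2, rfl⟩, ?_⟩, ?_, ?_⟩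
  · rintro x ⟨i, h1, h2, rfl⟩
    exact hMi i h1 h2
  · -- membership in the second set
    obtain ⟨y, hyd, hyinf⟩ := exists_far_point p1 pn (c i₀) (hr i₀)
    set π : Fin n → E2 := fun j =>
      if j.1 = 0 then p1 else if j.1 = n-1 then pn else if j = i₀ then y else c j with hπdef
    have h0 : π ⟨0, by omega⟩ = p1 := by simp [hπdef]
    have hl : π ⟨n-1, by omega⟩ = pn := by
      have hne : n - 1 ≠ 0 := by omega
      simp [hπdef, hne]
    have hπi₀ : π i₀ = y := by
      have h1 : (i₀ : ℕ) ≠ 0 := by omega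
      have h2 : (i₀ : ℕ) ≠ n - 1 := by omega
      simp [hπdef, h1, h2]
    have hπmem : ∀ i, π i ∈ Metric.closedBall (c i) (r i) := by
      intro j
      by_cases hj0 : (j : ℕ) = 0
      · have hv : π j = p1 := by simp [hπdef, hj0]
        have hj : j = ⟨0, by omega⟩ := Fin.ext hj0
        rw [hv, hj]; exact hp1
      · by_cases hjl : (j : ℕ) = n - 1
        · have hne : n - 1 ≠ 0 := by omega
          have hv : π j = pn := by simp [hπdef, hj0, hjl, hne]
          have hj : j = ⟨n-1, by omega⟩ := Fin.ext hjl
          rw [hv, hj]; exact hpn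
        · by_cases hji : j = i₀
          · subst hji
            rw [hπi₀, mem_closedBall, dist_comm]
            exact hyd
          · have hv : π j = c j := by simp [hπdef, hj0, hjl, hji]
            rw [hv]
            exact mem_closedBall_self (hr j)
    have hyc : y ∈ polyCurve π := by
      apply mem_polyCurve_of π i₀.1 hi₀2
      have e : (⟨i₀.1, by omega⟩ : Fin n) = i₀ := Fin.ext rfl
      rw [e, hπi₀]
      exact left_mem_segment _ _ _
    have hge : infDist (c i₀) (segment ℝ p1 pn) + r i₀ ≤
        hausdorffDist (polyCurve π) (segment ℝ p1 pn) := by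
      rw [← hyinf]
      exact infDist_le_hausdorffDist_of_mem hyc
        (hausdorffEdist_ne_top_of_nonempty_of_bounded ⟨y, hyc⟩ (seg_ne p1 pn)
          (isCompact_polyCurve π).isBounded (isCompact_seg p1 pn).isBounded)
    have hle := haus_le hn c r p1 pn π hπmem h0 hl hM0 hMi
    exact ⟨π, hπmem, h0, hl, (le_antisymm hle hge).symm⟩
  · rintro d ⟨π', hπ', h0', hl', rfl⟩
    exact haus_le hn c r p1 pn π' hπ' h0' hl' hM0 hMi
end

section
/- Let c ∈ ℝ², r ≥ 0, ε > 0, and p, q ∈ ℝ². Then every point of the closed disk of radius r around c is within distance ε of the segment pq if and only if that segment meets the closed disk of radius ε − r around c: (∀ p' ∈ closedBall c r, infDist p' (segment ℝ p q) ≤ ε) ↔ (segment ℝ p q ∩ closedBall c (ε − r)).Nonempty. -/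
open Metric
open scoped RealInnerProductSpace

lemma perp_unit_aux (d : EuclideanSpace ℝ (Fin 2)) :
    ∃ u : EuclideanSpace ℝ (Fin 2), ‖u‖ = 1 ∧ (⟪u, d⟫) = 0 := by
  by_cases hd : d = 0
  · exact ⟨EuclideanSpace.single 0 1, by simp [EuclideanSpace.norm_single], by simp [hd]⟩
  · set v : EuclideanSpace ℝ (Fin 2) := WithLp.toLp 2 ![-(d 1), d 0] with hv
    have hnv : ‖v‖ = ‖d‖ := by
      rw [EuclideanSpace.norm_eq, EuclideanSpace.norm_eq]
      congr 1
      simp [hv, Fin.sum_univ_two]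
      ring
    have hdn : ‖d‖ ≠ 0 := norm_ne_zero_iff.mpr hd
    refine ⟨‖d‖⁻¹ • v, ?_, ?_⟩
    · rw [norm_smul, hnv, norm_inv, norm_norm, inv_mul_cancel₀ hdn]
    · rw [real_inner_smul_left]
      have : (⟪v, d⟫) = 0 := by
        simp [PiLp.inner_apply, hv, Fin.sum_univ_two]
        ring
      rw [this, mul_zero]

theorem ball_within_eps_of_segment_iff_stab
    (c : EuclideanSpace ℝ (Fin 2)) (r ε : ℝ) (hr : 0 ≤ r) (hε : 0 < ε)
    (p q : EuclideanSpace ℝ (Fin 2)) :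
    (∀ p' ∈ Metric.closedBall c r, Metric.infDist p' (segment ℝ p q) ≤ ε) ↔
      (segment ℝ p q ∩ Metric.closedBall c (ε - r)).Nonempty := by
  set S := segment ℝ p q with hS
  have hSne : S.Nonempty := ⟨p, left_mem_segment ℝ p q⟩
  have hScomp : IsCompact S := by
    rw [hS, segment_eq_image]
    exact isCompact_Icc.image (by continuity)
  have hSconv : Convex ℝ S := convex_segment p q
  constructor
  · intro h
    obtain ⟨x, hxS, hx⟩ := hScomp.exists_infDist_eq_dist hSne c
    set d₀ := infDist c S with hd₀
    have hd₀0 : 0 ≤ d₀ := infDist_nonneg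
    -- find a unit vector u with d₀ ≤ ⟪u, c - y⟫ for all y ∈ S
    have key : ∃ u : EuclideanSpace ℝ (Fin 2), ‖u‖ = 1 ∧ ∀ y ∈ S, d₀ ≤ ⟪u, c - y⟫ := by
      rcases eq_or_lt_of_le hd₀0 with h0 | hpos
      · -- d₀ = 0, c ∈ S; use a perpendicular vector with suitable sign
        obtain ⟨u, hu1, hu0⟩ := perp_unit_aux (q - p)
        rcases le_total 0 (⟪u, c - p⟫) with hsign | hsign
        · refine ⟨u, hu1, fun y hy => ?_⟩
          obtain ⟨a, b, ha, hb, hab, rfl⟩ := hy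
          have hyy : a • p + b • q = p + b • (q - p) := by
            rw [smul_sub]
            rw [show a = 1 - b by linarith]
            module
          rw [← h0, hyy]
          have : c - (p + b • (q - p)) = (c - p) - b • (q - p) := by abel
          rw [this, inner_sub_right, real_inner_smul_right, hu0, mul_zero, sub_zero]
          exact hsign
        · refine ⟨-u, by simpa using hu1, fun y hy => ?_⟩
          obtain ⟨a, b, ha, hb, hab, rfl⟩ := hy
          have hyy : a • p + b • q = p + b • (q - p) := by
            rw [smul_sub]
            rw [show a = 1 - b by linarith]
            module
          rw [← h0, hyy]
          have : c - (p + b • (q - p)) = (c - p) - b • (q - p) := by abel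
          rw [this, inner_neg_left, inner_sub_right, real_inner_smul_right, hu0, mul_zero,
            sub_zero]
          linarith
      · -- d₀ > 0: use the direction from the nearest point
        have hne : ‖c - x‖ = d₀ := by rw [hx, dist_eq_norm]
        have hproj : ∀ w ∈ S, ⟪c - x, w - x⟫ ≤ 0 := by
          have hiInf : ‖c - x‖ = ⨅ w : S, ‖c - w‖ := by
            rw [hne, hd₀, infDist_eq_iInf]
            exact iInf_congr fun w => dist_eq_norm c w
          exact (norm_eq_iInf_iff_real_inner_le_zero hSconv hxS).mp hiInf
        have hnz : ‖c - x‖ ≠ 0 := by rw [hne]; exact ne_of_gt hpos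
        refine ⟨‖c - x‖⁻¹ • (c - x), ?_, fun y hy => ?_⟩
        · rw [norm_smul, norm_inv, norm_norm, inv_mul_cancel₀ hnz]
        · rw [real_inner_smul_left]
          have hsplit : c - y = (c - x) - (y - x) := by abel
          rw [hsplit, inner_sub_right, real_inner_self_eq_norm_sq]
          have h1 : ⟪c - x, y - x⟫ ≤ 0 := hproj y hy
          have h2 : (0:ℝ) < ‖c - x‖ := lt_of_le_of_ne (norm_nonneg _) (Ne.symm hnz)
          rw [← hne]
          have : ‖c - x‖ ^ 2 ≤ ‖c - x‖ ^ 2 - ⟪c - x, y - x⟫ := by linarith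
          calc ‖c - x‖ = ‖c - x‖⁻¹ * ‖c - x‖ ^ 2 := by field_simp
            _ ≤ ‖c - x‖⁻¹ * (‖c - x‖ ^ 2 - ⟪c - x, y - x⟫) := by
                apply mul_le_mul_of_nonneg_left this (inv_nonneg.2 (norm_nonneg _))
    obtain ⟨u, hu1, hu⟩ := key
    -- consider p' = c + r • u
    set p' : EuclideanSpace ℝ (Fin 2) := c + r • u with hp'
    have hp'mem : p' ∈ closedBall c r := by
      rw [mem_closedBall, dist_eq_norm]
      have : p' - c = r • u := by rw [hp']; abel
      rw [this, norm_smul, hu1, mul_one]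
      simpa using le_of_eq (abs_of_nonneg hr)
    obtain ⟨y, hy, hyd⟩ := hScomp.exists_infDist_eq_dist hSne p'
    have hle : d₀ + r ≤ infDist p' S := by
      rw [hyd]
      have hsq : (d₀ + r) ^ 2 ≤ dist p' y ^ 2 := by
        rw [dist_eq_norm]
        have : p' - y = (c - y) + r • u := by rw [hp']; abel
        rw [this, norm_add_sq_real]
        have h1 : d₀ ≤ ‖c - y‖ := by
          rw [hd₀, ← dist_eq_norm]
          exact infDist_le_dist_of_mem hy
        have h2 : ⟪c - y, r • u⟫ = r * ⟪u, c - y⟫ := by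
          rw [real_inner_smul_right, real_inner_comm]
        have h3 : ‖r • u‖ = r := by
          rw [norm_smul, hu1, mul_one, Real.norm_eq_abs, abs_of_nonneg hr]
        rw [h2, h3]
        have h4 : d₀ ≤ ⟪u, c - y⟫ := hu y hy
        nlinarith [norm_nonneg (c - y)]
      have := le_of_pow_le_pow_left₀ two_ne_zero dist_nonneg hsq
      exact this
    have hcle : d₀ + r ≤ ε := le_trans hle (h p' hp'mem)
    exact ⟨x, hxS, by rw [mem_closedBall, dist_comm, ← hx]; linarith⟩
  · rintro ⟨y, hyS, hy⟩ p' hp'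
    calc infDist p' S ≤ dist p' y := infDist_le_dist_of_mem hyS
      _ ≤ dist p' c + dist c y := dist_triangle _ _ _
      _ ≤ r + (ε - r) := add_le_add (mem_closedBall.mp hp') (mem_closedBall'.mp hy)
      _ = ε := by ring
end

section
/- Let c ∈ ℝ², r ≥ 0, and a, b ∈ ℝ². The maximum over the closed disk of radius r around c of the distance to the segment ab equals the distance from the centre plus the radius: IsGreatest ((fun p => Metric.infDist p (segment ℝ a b)) '' Metric.closedBall c r) (Metric.infDist c (segment ℝ a b) + r). -/
open Metric RealInnerProductSpace

lemma exists_perp (v : EuclideanSpace ℝ (Fin 2)) :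
    ∃ u : EuclideanSpace ℝ (Fin 2), ‖u‖ = ‖v‖ ∧ (inner ℝ u v : ℝ) = 0 := by
  refine ⟨(WithLp.equiv 2 _).symm ![-v 1, v 0], ?_, ?_⟩
  · rw [EuclideanSpace.norm_eq, EuclideanSpace.norm_eq]
    congr 1
    simp [Fin.sum_univ_two]
    ring
  · simp [PiLp.inner_apply, Fin.sum_univ_two]
    ring

lemma le_infDist_of_forall {X : Type*} [MetricSpace X] {S : Set X} (hne : S.Nonempty)
    {x : X} {r : ℝ} (h : ∀ y ∈ S, r ≤ dist x y) : r ≤ Metric.infDist x S := by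
  rw [← not_lt, Metric.infDist_lt_iff hne]
  push_neg
  exact h

lemma inner_nearest_le_zero (c a b q : EuclideanSpace ℝ (Fin 2))
    (hqS : q ∈ segment ℝ a b) (hq : Metric.infDist c (segment ℝ a b) = dist c q) :
    ∀ s ∈ segment ℝ a b, (inner ℝ (c - q) (s - q) : ℝ) ≤ 0 := by
  have hne : (segment ℝ a b).Nonempty := ⟨a, left_mem_segment ℝ a b⟩
  have hconv : Convex ℝ (segment ℝ a b) := convex_segment a b
  have hmin : ‖c - q‖ = ⨅ w : segment ℝ a b, ‖c - w‖ := by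
    haveI : Nonempty (segment ℝ a b) := hne.to_subtype
    apply le_antisymm
    · apply le_ciInf
      rintro ⟨w, hw⟩
      have h := Metric.infDist_le_dist_of_mem (x := c) hw
      rw [hq] at h
      simpa [dist_eq_norm] using h
    · have hbdd : BddBelow (Set.range fun w : segment ℝ a b => ‖c - w‖) := by
        refine ⟨0, ?_⟩
        rintro x ⟨w, rfl⟩
        exact norm_nonneg _
      exact ciInf_le hbdd ⟨q, hqS⟩
  exact (norm_eq_iInf_iff_real_inner_le_zero hconv hqS).mp hmin

set_option maxHeartbeats 1000000 in
theorem max_dist_segment_over_ball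
    (c a b : EuclideanSpace ℝ (Fin 2)) (r : ℝ) (hr : 0 ≤ r) :
    IsGreatest ((fun p => Metric.infDist p (segment ℝ a b)) '' Metric.closedBall c r)
      (Metric.infDist c (segment ℝ a b) + r) := by
  set S := segment ℝ a b with hS
  have hne : S.Nonempty := ⟨a, left_mem_segment ℝ a b⟩
  have hcpt : IsCompact S := by
    rw [hS, segment_eq_image]
    exact isCompact_Icc.image (by continuity)
  obtain ⟨q, hqS, hq⟩ := hcpt.exists_infDist_eq_dist hne c
  have hub : ∀ p ∈ Metric.closedBall c r,
      Metric.infDist p S ≤ Metric.infDist c S + r := by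
    intro p hp
    calc Metric.infDist p S ≤ Metric.infDist c S + dist p c :=
          Metric.infDist_le_infDist_add_dist
      _ ≤ Metric.infDist c S + r := add_le_add le_rfl (Metric.mem_closedBall.mp hp)
  constructor
  · by_cases hcq : c = q
    · have h0 : Metric.infDist c S = 0 := by rw [hq, hcq, dist_self]
      by_cases hab : a = b
      · refine ⟨c + r • EuclideanSpace.single 0 1, by
          simp [dist_eq_norm, norm_smul, abs_of_nonneg hr], ?_⟩
        have hSa : S = {a} := by rw [hS, hab, segment_same]
        have hca : c = a := by rw [hSa] at hqS; rw [hcq, hqS]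
        simp [hSa, Metric.infDist_singleton, h0, hca, dist_eq_norm, norm_smul,
          abs_of_nonneg hr]
      · have hv : b - a ≠ 0 := sub_ne_zero.mpr (Ne.symm hab)
        obtain ⟨u, hu_norm, hu_perp⟩ := exists_perp (b - a)
        have hun : ‖u‖ ≠ 0 := by rw [hu_norm]; exact norm_ne_zero_iff.mpr hv
        set p := c + (r / ‖u‖) • u with hp
        clear_value p
        have h1 : ‖(r / ‖u‖) • u‖ = r := by
          rw [norm_smul, Real.norm_eq_abs, abs_div, abs_of_nonneg hr,
            abs_of_nonneg (norm_nonneg u)]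
          field_simp
        have hdist : dist p c = r := by
          rw [hp, dist_eq_norm, add_sub_cancel_left, h1]
        refine ⟨p, Metric.mem_closedBall.mpr hdist.le, ?_⟩
        have hle : Metric.infDist p S ≤ r := by
          have := hub p (Metric.mem_closedBall.mpr hdist.le)
          rwa [h0, zero_add] at this
        have hge : r ≤ Metric.infDist p S := by
          apply le_infDist_of_forall hne
          intro s hs
          obtain ⟨α1, α2, hα1, hα2, hαs, hceq⟩ := hqS
          obtain ⟨β1, β2, hβ1, hβ2, hβs, hseq⟩ := hs
          have hcs : c - s = (α2 - β2) • (b - a) := by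
            have h1 : α1 = 1 - α2 := by linarith
            have h2 : β1 = 1 - β2 := by linarith
            rw [hcq, ← hceq, ← hseq, h1, h2]; module
          have hsq : dist p s ^ 2 = r ^ 2 + ((α2 - β2) * ‖b - a‖) ^ 2 := by
            have hps : p - s = (r / ‖u‖) • u + (α2 - β2) • (b - a) := by
              rw [hp, ← hcs]; abel
            rw [dist_eq_norm, hps, norm_add_sq_real, real_inner_smul_left,
              real_inner_smul_right, hu_perp, h1, norm_smul]
            simp [Real.norm_eq_abs, mul_pow, sq_abs]
          nlinarith [dist_nonneg (x := p) (y := s), sq_nonneg ((α2 - β2) * ‖b - a‖)]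
        rw [h0, zero_add]
        exact le_antisymm hle hge
    · set d := dist c q with hd
      have hd0 : 0 < d := by rw [hd, dist_pos]; exact hcq
      set p := c + (r / d) • (c - q) with hp
      clear_value d p
      have hdist : dist p c = r := by
        rw [hp, dist_eq_norm, add_sub_cancel_left, norm_smul, ← dist_eq_norm, ← hd,
          Real.norm_eq_abs, abs_div, abs_of_nonneg hr, abs_of_nonneg hd0.le]
        field_simp
      refine ⟨p, Metric.mem_closedBall.mpr hdist.le, ?_⟩
      have hle : Metric.infDist p S ≤ Metric.infDist c S + r :=
        hub p (Metric.mem_closedBall.mpr hdist.le)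
      have hinner : ∀ s ∈ S, (inner ℝ (c - q) (s - q) : ℝ) ≤ 0 :=
        inner_nearest_le_zero c a b q hqS (by rw [hq, hd])
      have hge : Metric.infDist c S + r ≤ Metric.infDist p S := by
        apply le_infDist_of_forall hne
        intro s hs
        have h1 : (inner ℝ (c - q) (s - q) : ℝ) ≤ 0 := hinner s hs
        have hps : p - s = (1 + r / d) • (c - q) - (s - q) := by
          rw [hp]; module
        have hsq : dist p s ^ 2 = ((1 + r / d) * d) ^ 2
            - 2 * (1 + r / d) * (inner ℝ (c - q) (s - q) : ℝ) + ‖s - q‖ ^ 2 := by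
          rw [dist_eq_norm, hps, norm_sub_sq_real, real_inner_smul_left, norm_smul,
            Real.norm_eq_abs, abs_of_nonneg (by positivity : (0:ℝ) ≤ 1 + r / d),
            ← dist_eq_norm, ← hd]
          ring
        have hdr : Metric.infDist c S + r = (1 + r / d) * d := by
          rw [hq]; field_simp
        rw [hdr]
        have h2 : ((1 + r / d) * d) ^ 2 ≤ dist p s ^ 2 := by
          rw [hsq]
          nlinarith [sq_nonneg ‖s - q‖, hd0, hr]
        have h3 : 0 ≤ (1 + r / d) * d := by positivity
        nlinarith [dist_nonneg (x := p) (y := s)]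
      exact le_antisymm hle hge
  · rintro x ⟨p, hp, rfl⟩
    exact hub p hp
end
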